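/- Let k ≥ 2 and h ≥ 1. There exists a non-empty h-ary hereditarily 2-rigid relation on **k** if and only if k(k−1) ≤ binom(2^h − 2, 2^{h−1} − 1). -/

import Mathlib

/-- A unary partial function on `Fin k`: a domain together with a value map
(values outside the domain are irrelevant). -/
structure PFun1 (k : ℕ) where
  Dom : Set (Fin k)
  toFun : Fin k → Fin k

/-- A unary partial function `f` preserves the `h`-ary relation `ρ` if whenever a
tuple of `ρ` has all its entries in the domain of `f`, the image tuple is in `ρ`. -/
def Preserves1 {k h : ℕ} (f : PFun1 k) (ρ : Set (Fin h → Fin k)) : Prop :=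
  ∀ M : Fin h → Fin k, M ∈ ρ → (∀ i, M i ∈ f.Dom) → (fun i => f.toFun (M i)) ∈ ρ

/-- `pPol^{(1)}(ρ)`: the set of unary partial functions preserving `ρ`. -/
def pPol1 {k : ℕ} (h : ℕ) (ρ : Set (Fin h → Fin k)) : Set (PFun1 k) :=
  { f | Preserves1 f ρ }

/-- `Ω_{<ℓ}(k)`: unary partial functions that are restrictions of the identity
or whose image has fewer than `ℓ` elements. -/
def Omega (k ℓ : ℕ) : Set (PFun1 k) :=
  { f | (∀ x ∈ f.Dom, f.toFun x = x) ∨ (f.toFun '' f.Dom).ncard < ℓ }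

/-- `Ψ_ℓ(k)`: unary partial functions with domain of size `ℓ` not in `Ω_{<ℓ}(k)`. -/
def Psi (k ℓ : ℕ) : Set (PFun1 k) :=
  { f | f.Dom.ncard = ℓ ∧ f ∉ Omega k ℓ }

/-- `g` is a subfunction of `f`. -/
def Sub1 {k : ℕ} (g f : PFun1 k) : Prop :=
  g.Dom ⊆ f.Dom ∧ ∀ x ∈ g.Dom, g.toFun x = f.toFun x

/-- `ρ` is hereditarily `ℓ`-rigid: `pPol^{(1)}(ρ) = Ω_{<ℓ}(k)`. -/
def HereditarilyRigid {k : ℕ} (h : ℕ) (ℓ : ℕ) (ρ : Set (Fin h → Fin k)) : Prop :=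
  pPol1 h ρ = Omega k ℓ

/-- `T_ρ^ℓ(x)`: the set of surjective `i : [h] → [ℓ]` with `x ∘ i ∈ ρ`. -/
def Tset {k h : ℕ} (ℓ : ℕ) (ρ : Set (Fin h → Fin k)) (x : Fin ℓ → Fin k) :
    Set (Fin h → Fin ℓ) :=
  { i | Function.Surjective i ∧ x ∘ i ∈ ρ }

/-- `s(h, ℓ)`: the number of surjections from an `h`-element set onto an `ℓ`-element set. -/
noncomputable def numSurj (h ℓ : ℕ) : ℕ := Nat.card { i : Fin h → Fin ℓ // Function.Surjective i }


namespace TwoRigidAux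
open Function



lemma fin2_cases (t : Fin 2) : t = 0 ∨ t = 1 := by omega

lemma not_surjective_iff {h : ℕ} (hh : 1 ≤ h) (i : Fin h → Fin 2) :
    ¬ Surjective i ↔ (i = fun _ => 0) ∨ (i = fun _ => 1) := by
  constructor
  · intro hns
    rw [Surjective, not_forall] at hns
    obtain ⟨t, ht⟩ := hns
    rw [not_exists] at ht
    rcases fin2_cases t with rfl | rfl
    · right; funext j
      rcases fin2_cases (i j) with hj | hj
      · exact absurd hj (ht j)
      · exact hj
    · left; funext j
      rcases fin2_cases (i j) with hj | hj
      · exact hj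
      · exact absurd hj (ht j)
  · rintro (rfl | rfl)
    · intro hs; obtain ⟨j, hj⟩ := hs 1; simp at hj
    · intro hs; obtain ⟨j, hj⟩ := hs 0; simp at hj

/-- the set of surjections `Fin h → Fin 2` -/
def Sf (h : ℕ) : Finset (Fin h → Fin 2) := Finset.univ.filter (fun i => Surjective i)

lemma card_Sf {h : ℕ} (hh : 1 ≤ h) : (Sf h).card = 2 ^ h - 2 := by
  classical
  have hsplit := Finset.card_filter_add_card_filter_not
    (s := (Finset.univ : Finset (Fin h → Fin 2))) (p := fun i => Surjective i)
  have huniv : (Finset.univ : Finset (Fin h → Fin 2)).card = 2 ^ h := by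
    simp
  have hneg : (Finset.univ.filter (fun i : Fin h → Fin 2 => ¬ Surjective i)).card = 2 := by
    have heq : Finset.univ.filter (fun i : Fin h → Fin 2 => ¬ Surjective i)
        = {fun _ => (0 : Fin 2), fun _ => (1 : Fin 2)} := by
      ext i
      simp [not_surjective_iff hh]
    rw [heq, Finset.card_insert_of_notMem, Finset.card_singleton]
    simp only [Finset.mem_singleton]
    intro hcontra
    have := congrFun hcontra ⟨0, hh⟩
    simp at this
  have hpow : 2 ≤ 2 ^ h := by
    calc 2 = 2 ^ 1 := by norm_num
    _ ≤ 2 ^ h := Nat.pow_le_pow_right (by norm_num) hh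
  have : (Sf h).card + 2 = 2 ^ h := by
    rw [Sf]; omega
  omega

lemma even_card_of_involution {β : Type*} [DecidableEq β] (f : β → β)
    (hff : ∀ x, f (f x) = x) :
    ∀ (n : ℕ) (A : Finset β), A.card ≤ n → (∀ x ∈ A, f x ∈ A) → (∀ x ∈ A, f x ≠ x) →
      Even A.card := by
  intro n
  induction n with
  | zero => intro A hA _ _; simp [Finset.card_eq_zero.mp (Nat.le_zero.mp hA)]
  | succ n ih =>
    intro A hA hcl hnf
    rcases A.eq_empty_or_nonempty with rfl | ⟨a, ha⟩
    · simp
    · have hfa := hcl a ha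
      have hfaa := hnf a ha
      set A' := (A.erase a).erase (f a) with hA'
      have hmem1 : f a ∈ A.erase a := Finset.mem_erase.mpr ⟨hfaa, hfa⟩
      have h2 : 1 < A.card := Finset.one_lt_card.mpr ⟨a, ha, f a, hfa, Ne.symm hfaa⟩
      have hcard : A'.card + 2 = A.card := by
        rw [hA', Finset.card_erase_of_mem hmem1, Finset.card_erase_of_mem ha]
        omega
      have hmemA' : ∀ x, x ∈ A' ↔ x ∈ A ∧ x ≠ a ∧ x ≠ f a := by
        intro x; simp only [hA', Finset.mem_erase]; tauto
      have hcl' : ∀ x ∈ A', f x ∈ A' := by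
        intro x hx
        rw [hmemA'] at hx ⊢
        refine ⟨hcl x hx.1, ?_, ?_⟩
        · intro hxa; apply hx.2.2; rw [← hxa, hff]
        · intro hxf; apply hx.2.1
          have := congrArg f hxf; rwa [hff, hff] at this
      have hnf' : ∀ x ∈ A', f x ≠ x := fun x hx => hnf x ((hmemA' x).mp hx).1
      obtain ⟨t, ht⟩ := ih A' (by omega) hcl' hnf'
      exact ⟨t + 1, by omega⟩

lemma selection {P β : Type*} [DecidableEq P] [DecidableEq β]
    (τ : P → P) (σ : β → β) (hτ : ∀ p, τ (τ p) = p) (hσ : ∀ A, σ (σ A) = A) (b₀ : β) :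
    ∀ (n : ℕ) (Q : Finset P) (M : Finset β), Q.card ≤ n →
      (∀ p ∈ Q, τ p ∈ Q) → (∀ p ∈ Q, τ p ≠ p) →
      (∀ A ∈ M, σ A ∈ M) → (∀ A ∈ M, σ A ≠ A) →
      Q.card ≤ M.card →
      ∃ T : P → β, (∀ p ∈ Q, T p ∈ M) ∧ (∀ p ∈ Q, T (τ p) = σ (T p)) ∧
        (∀ p ∈ Q, ∀ q ∈ Q, T p = T q → p = q) := by
  intro n
  induction n with
  | zero =>
    intro Q M hQ _ _ _ _ _
    have hQe : Q = ∅ := Finset.card_eq_zero.mp (Nat.le_zero.mp hQ)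
    subst hQe
    exact ⟨fun _ => b₀, by simp, by simp, by simp⟩
  | succ n ih =>
    intro Q M hQn hQcl hQnf hMcl hMnf hQM
    rcases Q.eq_empty_or_nonempty with rfl | ⟨p, hp⟩
    · exact ⟨fun _ => b₀, by simp, by simp, by simp⟩
    · have hq0 : τ p ∈ Q := hQcl p hp
      have hqp : τ p ≠ p := hQnf p hp
      have hQ2 : 2 ≤ Q.card := Finset.one_lt_card.mpr ⟨p, hp, τ p, hq0, hqp.symm⟩
      obtain ⟨A, hA⟩ : M.Nonempty := Finset.card_pos.mp (by omega)
      have hsA : σ A ∈ M := hMcl A hA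
      have hsAA : σ A ≠ A := hMnf A hA
      set Q' := (Q.erase p).erase (τ p) with hQ'def
      set M' := (M.erase A).erase (σ A) with hM'def
      have hQ'mem : ∀ x, x ∈ Q' ↔ x ∈ Q ∧ x ≠ p ∧ x ≠ τ p := by
        intro x; simp only [hQ'def, Finset.mem_erase]; tauto
      have hM'mem : ∀ x, x ∈ M' ↔ x ∈ M ∧ x ≠ A ∧ x ≠ σ A := by
        intro x; simp only [hM'def, Finset.mem_erase]; tauto
      have hQ'card : Q'.card + 2 = Q.card := by
        rw [hQ'def, Finset.card_erase_of_mem (Finset.mem_erase.mpr ⟨hqp, hq0⟩),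
          Finset.card_erase_of_mem hp]
        omega
      have hM'card : M'.card + 2 = M.card := by
        rw [hM'def, Finset.card_erase_of_mem (Finset.mem_erase.mpr ⟨hsAA, hsA⟩),
          Finset.card_erase_of_mem hA]
        omega
      obtain ⟨T', hT'mem, hT'eq, hT'inj⟩ := ih Q' M' (by omega)
        (fun x hx => by
          rw [hQ'mem] at hx ⊢
          refine ⟨hQcl x hx.1, fun hc => hx.2.2 (by rw [← hc, hτ]),
            fun hc => hx.2.1 (by have := congrArg τ hc; rwa [hτ, hτ] at this)⟩)
        (fun x hx => hQnf x ((hQ'mem x).mp hx).1)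
        (fun B hB => by
          rw [hM'mem] at hB ⊢
          refine ⟨hMcl B hB.1, fun hc => hB.2.2 (by rw [← hc, hσ]),
            fun hc => hB.2.1 (by have := congrArg σ hc; rwa [hσ, hσ] at this)⟩)
        (fun B hB => hMnf B ((hM'mem B).mp hB).1)
        (by omega)
      have hT'M : ∀ q ∈ Q', T' q ∈ M ∧ T' q ≠ A ∧ T' q ≠ σ A :=
        fun q hq => (hM'mem _).mp (hT'mem q hq)
      refine ⟨fun q => if q = p then A else if q = τ p then σ A else T' q, ?_, ?_, ?_⟩
      · intro q hq
        by_cases hq1 : q = p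
        · simp [hq1, hA]
        · by_cases hq2 : q = τ p
          · simp [hq1, hq2, hqp, hsA]
          · simp only [if_neg hq1, if_neg hq2]
            exact (hT'M q ((hQ'mem q).mpr ⟨hq, hq1, hq2⟩)).1
      · intro q hq
        by_cases hq1 : q = p
        · subst hq1; simp [hqp]
        · by_cases hq2 : q = τ p
          · subst hq2; simp [hτ, hqp, hσ]
          · have hq' : q ∈ Q' := (hQ'mem q).mpr ⟨hq, hq1, hq2⟩
            have hτq1 : τ q ≠ p := fun hc => hq2 (by rw [← hc, hτ])
            have hτq2 : τ q ≠ τ p := fun hc => hq1 (by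
              have := congrArg τ hc; rwa [hτ, hτ] at this)
            simp only [if_neg hq1, if_neg hq2, if_neg hτq1, if_neg hτq2]
            exact hT'eq q hq'
      · intro q hq r hr heq
        by_cases hq1 : q = p <;> by_cases hr1 : r = p
        · rw [hq1, hr1]
        · by_cases hr2 : r = τ p
          · simp only [if_pos hq1, if_neg hr1, if_pos hr2] at heq
            exact absurd heq.symm hsAA
          · simp only [if_pos hq1, if_neg hr1, if_neg hr2] at heq
            exact absurd heq.symm (hT'M r ((hQ'mem r).mpr ⟨hr, hr1, hr2⟩)).2.1
        · by_cases hq2 : q = τ p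
          · simp only [if_neg hq1, if_pos hq2, if_pos hr1] at heq
            exact absurd heq hsAA
          · simp only [if_neg hq1, if_neg hq2, if_pos hr1] at heq
            exact absurd heq (hT'M q ((hQ'mem q).mpr ⟨hq, hq1, hq2⟩)).2.1
        · by_cases hq2 : q = τ p <;> by_cases hr2 : r = τ p
          · rw [hq2, hr2]
          · simp only [if_neg hq1, if_pos hq2, if_neg hr1, if_neg hr2] at heq
            exact absurd heq.symm (hT'M r ((hQ'mem r).mpr ⟨hr, hr1, hr2⟩)).2.2
          · simp only [if_neg hq1, if_neg hq2, if_neg hr1, if_pos hr2] at heq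
            exact absurd heq (hT'M q ((hQ'mem q).mpr ⟨hq, hq1, hq2⟩)).2.2
          · simp only [if_neg hq1, if_neg hq2, if_neg hr1, if_neg hr2] at heq
            exact hT'inj q ((hQ'mem q).mpr ⟨hq, hq1, hq2⟩) r ((hQ'mem r).mpr ⟨hr, hr1, hr2⟩) heq



/-- the pair function `0 ↦ p.1`, `1 ↦ p.2` -/
def pairFun {k : ℕ} (p : Fin k × Fin k) : Fin 2 → Fin k := fun t => if t = 0 then p.1 else p.2

lemma pairFun_zero {k : ℕ} (p : Fin k × Fin k) : pairFun p 0 = p.1 := if_pos rfl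

lemma pairFun_one {k : ℕ} (p : Fin k × Fin k) : pairFun p 1 = p.2 := if_neg (by decide)

lemma pairFun_inj {k : ℕ} {p : Fin k × Fin k} (hp : p.1 ≠ p.2) :
    Function.Injective (pairFun p) := by
  intro t t' htt
  rcases fin2_cases t with rfl | rfl <;> rcases fin2_cases t' with rfl | rfl
  · rfl
  · rw [pairFun_zero, pairFun_one] at htt; exact absurd htt hp
  · rw [pairFun_zero, pairFun_one] at htt; exact absurd htt.symm hp
  · rfl

lemma decode {k h : ℕ} {p q : Fin k × Fin k} (hp : p.1 ≠ p.2) (hq : q.1 ≠ q.2)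
    {i i' : Fin h → Fin 2} (hi : Surjective i) (hE : pairFun p ∘ i = pairFun q ∘ i') :
    (q = p ∧ i' = i) ∨ (q = (p.2, p.1) ∧ i' = fun j => i j + 1) := by
  obtain ⟨j0, hj0⟩ := hi 0
  obtain ⟨j1, hj1⟩ := hi 1
  have E : ∀ j, pairFun p (i j) = pairFun q (i' j) := fun j => congrFun hE j
  have E0 := E j0; rw [hj0, pairFun_zero] at E0
  have E1 := E j1; rw [hj1, pairFun_one] at E1
  rcases fin2_cases (i' j0) with h0 | h0
  · rw [h0, pairFun_zero] at E0
    have h1 : i' j1 = 1 := by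
      rcases fin2_cases (i' j1) with hh1 | hh1
      · rw [hh1, pairFun_zero] at E1; exact absurd (E0.trans E1.symm) hp
      · exact hh1
    rw [h1, pairFun_one] at E1
    left
    have hqp : q = p := Prod.ext E0.symm E1.symm
    refine ⟨hqp, funext fun j => ?_⟩
    have hEj := E j; rw [hqp] at hEj
    exact (pairFun_inj hp hEj).symm
  · rw [h0, pairFun_one] at E0
    have h1 : i' j1 = 0 := by
      rcases fin2_cases (i' j1) with hh1 | hh1
      · exact hh1
      · rw [hh1, pairFun_one] at E1; exact absurd (E0.trans E1.symm) hp
    rw [h1, pairFun_zero] at E1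
    right
    have hqp : q = (p.2, p.1) := Prod.ext E1.symm E0.symm
    refine ⟨hqp, funext fun j => ?_⟩
    have hx : ∀ t : Fin 2, pairFun q t = pairFun p (t + 1) := by
      intro t
      rcases fin2_cases t with rfl | rfl
      · rw [pairFun_zero, hqp, show (0 : Fin 2) + 1 = 1 by decide, pairFun_one]
      · rw [pairFun_one, hqp, show (1 : Fin 2) + 1 = 0 by decide, pairFun_zero]
    have hEj := E j
    rw [hx] at hEj
    have hij := pairFun_inj hp hEj
    rw [hij]
    exact ((by decide : ∀ t : Fin 2, t = t + 1 + 1) _)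

lemma card_pairs (k : ℕ) : Fintype.card {p : Fin k × Fin k // p.1 ≠ p.2} = k * k - k := by
  classical
  rw [Fintype.card_subtype]
  have h1 : (Finset.univ.filter fun p : Fin k × Fin k => ¬ p.1 ≠ p.2).card = k := by
    have himg : Finset.univ.filter (fun p : Fin k × Fin k => ¬ p.1 ≠ p.2)
        = Finset.univ.image (fun a : Fin k => (a, a)) := by
      ext ⟨x, y⟩
      simp only [Finset.mem_filter, Finset.mem_univ, true_and, not_not, Finset.mem_image]
      constructor
      · rintro rfl; exact ⟨x, rfl⟩
      · rintro ⟨a, ha⟩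
        obtain ⟨rfl, rfl⟩ := Prod.mk.injEq .. ▸ ha
        · rfl
    rw [himg, Finset.card_image_of_injective _
      (fun a b hab => by simpa using congrArg Prod.fst hab), Finset.card_univ, Fintype.card_fin]
  have h2 := Finset.card_filter_add_card_filter_not
    (s := (Finset.univ : Finset (Fin k × Fin k))) (p := fun p => p.1 ≠ p.2)
  have h3 : (Finset.univ : Finset (Fin k × Fin k)).card = k * k := by simp
  omega

lemma mul_sub_one' (k : ℕ) : k * (k - 1) = k * k - k := by
  cases k with
  | zero => simp
  | succ m =>
    have : (m + 1) * (m + 1) = (m + 1) * m + (m + 1) := by ring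
    simp only [Nat.add_sub_cancel]
    omega

lemma half_pow {h : ℕ} (hh : 1 ≤ h) : (2 ^ h - 2) / 2 = 2 ^ (h - 1) - 1 := by
  obtain ⟨m, rfl⟩ : ∃ m, h = m + 1 := ⟨h - 1, by omega⟩
  have : (2 : ℕ) ^ (m + 1) = 2 * 2 ^ m := by rw [pow_succ]; ring
  simp only [Nat.add_sub_cancel]
  omega


open Function

private theorem fwd_dir (k h : ℕ) (hk : 2 ≤ k) (hh : 1 ≤ h)
    (ρ : Set (Fin h → Fin k)) (hne : ρ.Nonempty) (hrig : _root_.HereditarilyRigid h 2 ρ) :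
    k * (k - 1) ≤ Nat.choose (2 ^ h - 2) (2 ^ (h - 1) - 1) := by
  classical
  haveI : Nonempty (Fin k) := ⟨⟨0, by omega⟩⟩
  haveI : Nonempty (Fin h) := ⟨⟨0, by omega⟩⟩
  obtain ⟨M₀, hM₀⟩ := hne
  have hrig' : _root_.pPol1 h ρ = _root_.Omega k 2 := hrig
  -- all constant tuples are in ρ
  have hconst : ∀ c : Fin k, (fun _ : Fin h => c) ∈ ρ := by
    intro c
    have hmem : (⟨Set.univ, fun _ => c⟩ : _root_.PFun1 k) ∈ _root_.Omega k 2 := by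
      simp only [_root_.Omega, Set.mem_setOf_eq]
      right
      have himg : ((fun _ : Fin k => c) '' Set.univ) = {c} := by
        rw [Set.image_univ, Set.range_const]
      show ((fun _ : Fin k => c) '' Set.univ).ncard < 2
      rw [himg, Set.ncard_singleton]
      omega
    rw [← hrig'] at hmem
    exact hmem M₀ hM₀ (fun i => Set.mem_univ _)
  -- the T-map into finsets of surjections
  set T : {p : Fin k × Fin k // p.1 ≠ p.2} → Finset {i : Fin h → Fin 2 // Surjective i} :=
    fun p => Finset.univ.filter (fun e => pairFun p.val ∘ e.val ∈ ρ) with hTdef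
  have hTmem : ∀ p e, e ∈ T p ↔ pairFun p.val ∘ e.val ∈ ρ := by
    intro p e; simp [hTdef]
  -- key: no containments
  have key : ∀ p q : {p : Fin k × Fin k // p.1 ≠ p.2}, p ≠ q → ¬ T p ⊆ T q := by
    rintro ⟨⟨a, b⟩, hab⟩ ⟨⟨c, d⟩, hcd⟩ hpq hsub
    simp only [ne_eq] at hab hcd
    have hne2 : ¬ (a = c ∧ b = d) := by
      intro ⟨h1, h2⟩; exact hpq (by subst h1; subst h2; rfl)
    set f : _root_.PFun1 k := ⟨{a, b}, fun z => if z = a then c else d⟩ with hfdef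
    have hfa : f.toFun a = c := if_pos rfl
    have hfb : f.toFun b = d := if_neg (Ne.symm hab)
    have hfO : f ∉ _root_.Omega k 2 := by
      simp only [_root_.Omega, Set.mem_setOf_eq]
      push_neg
      constructor
      · by_cases hac : c = a
        · refine ⟨b, Set.mem_insert_of_mem _ rfl, ?_⟩
          show (if b = a then c else d) ≠ b
          rw [if_neg (Ne.symm hab)]
          intro hdb
          exact hne2 ⟨hac.symm, hdb.symm⟩
        · refine ⟨a, Set.mem_insert _ _, ?_⟩
          show (if a = a then c else d) ≠ a
          rw [if_pos rfl]
          exact fun hca => hac hca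
      · have himg : f.toFun '' f.Dom = {c, d} := by
          show f.toFun '' {a, b} = {c, d}
          rw [Set.image_insert_eq, Set.image_singleton, hfa, hfb]
        rw [himg, Set.ncard_pair hcd]
    have hfP : f ∉ _root_.pPol1 h ρ := by rw [hrig']; exact hfO
    simp only [_root_.pPol1, Set.mem_setOf_eq, _root_.Preserves1] at hfP
    push_neg at hfP
    obtain ⟨w, hwρ, hwdom, hwim⟩ := hfP
    set i : Fin h → Fin 2 := fun j => if w j = a then 0 else 1 with hidef
    have hwi : ∀ j, w j = pairFun (a, b) (i j) := by
      intro j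
      rcases hwdom j with hj | hj
      · simp only [hidef, if_pos hj, pairFun_zero]; exact hj
      · rw [Set.mem_singleton_iff] at hj
        have hja : w j ≠ a := by rw [hj]; exact Ne.symm hab
        simp only [hidef, if_neg hja, pairFun_one]; exact hj
    have him : ∀ j, f.toFun (w j) = pairFun (c, d) (i j) := by
      intro j
      rcases hwdom j with hj | hj
      · rw [hj, hfa]; simp only [hidef, if_pos hj]
        exact (pairFun_zero (c, d)).symm
      · rw [Set.mem_singleton_iff] at hj
        have hja : w j ≠ a := by rw [hj]; exact Ne.symm hab
        rw [hj, hfb]; simp only [hidef, if_neg hja]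
        exact (pairFun_one (c, d)).symm
    have hsurj : Surjective i := by
      by_contra hns
      rw [not_surjective_iff hh] at hns
      rcases hns with h0 | h0
      · apply hwim
        have : (fun j => f.toFun (w j)) = fun _ => c := by
          funext j; rw [him j, congrFun h0 j, pairFun_zero]
        rw [this]; exact hconst c
      · apply hwim
        have : (fun j => f.toFun (w j)) = fun _ => d := by
          funext j; rw [him j, congrFun h0 j, pairFun_one]
        rw [this]; exact hconst d
    have heTp : (⟨i, hsurj⟩ : {i : Fin h → Fin 2 // Surjective i}) ∈ T ⟨(a, b), hab⟩ := by
      rw [hTmem]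
      have : pairFun (a, b) ∘ i = w := funext fun j => (hwi j).symm
      show pairFun (a, b) ∘ i ∈ ρ
      rw [this]; exact hwρ
    have heTq := hsub heTp
    rw [hTmem] at heTq
    apply hwim
    have : (fun j => f.toFun (w j)) = pairFun (c, d) ∘ i := funext fun j => him j
    rw [this]
    exact heTq
  -- Sperner
  have hTinj : Function.Injective T := by
    intro p q hpq'
    by_contra hne'
    exact key p q hne' (by rw [hpq'])
  set 𝒜 := Finset.univ.image T with h𝒜
  have hanti : IsAntichain (· ⊆ ·) (𝒜 : Set (Finset {i : Fin h → Fin 2 // Surjective i})) := by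
    intro A hA B hB hAB hsub
    rw [Finset.mem_coe, h𝒜, Finset.mem_image] at hA hB
    obtain ⟨p, -, rfl⟩ := hA
    obtain ⟨q, -, rfl⟩ := hB
    exact key p q (fun hc => hAB (by rw [hc])) hsub
  have hcard𝒜 : 𝒜.card = k * k - k := by
    rw [h𝒜, Finset.card_image_of_injective _ hTinj, Finset.card_univ, card_pairs]
  have hsp := IsAntichain.sperner hanti
  have hαcard : Fintype.card {i : Fin h → Fin 2 // Surjective i} = 2 ^ h - 2 := by
    rw [Fintype.card_subtype]
    exact card_Sf hh
  rw [hcard𝒜, hαcard, half_pow hh] at hsp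
  rw [mul_sub_one']
  exact hsp

private theorem bwd_dir (k h : ℕ) (hk : 2 ≤ k) (hh : 1 ≤ h)
    (hineq : k * (k - 1) ≤ Nat.choose (2 ^ h - 2) (2 ^ (h - 1) - 1)) :
    ∃ ρ : Set (Fin h → Fin k), ρ.Nonempty ∧ _root_.HereditarilyRigid h 2 ρ := by
  classical
  haveI : Nonempty (Fin k) := ⟨⟨0, by omega⟩⟩
  haveI : Nonempty (Fin h) := ⟨⟨0, by omega⟩⟩
  have hk2 : 2 ≤ k * (k - 1) := by
    calc 2 = 2 * 1 := by norm_num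
    _ ≤ k * (k - 1) := Nat.mul_le_mul hk (by omega)
  have hh2 : 2 ≤ h := by
    by_contra hcon
    have h1 : h = 1 := by omega
    subst h1
    norm_num at hineq
    omega
  -- the involution ν on tuples
  set ν : (Fin h → Fin 2) → (Fin h → Fin 2) := fun i j => i j + 1 with hνdef
  have hνν : ∀ i, ν (ν i) = i := by
    intro i; funext j
    show i j + 1 + 1 = i j
    exact (by decide : ∀ t : Fin 2, t + 1 + 1 = t) _
  have hνinj : Function.Injective ν := fun i i' hi => by rw [← hνν i, hi, hνν]
  have hνS : ∀ i : Fin h → Fin 2, Surjective i → Surjective (ν i) := by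
    intro i hi y
    obtain ⟨j, hj⟩ := hi (y + 1)
    refine ⟨j, ?_⟩
    show i j + 1 = y
    rw [hj]
    exact (by decide : ∀ t : Fin 2, t + 1 + 1 = t) _
  -- σF on finsets
  set σF : Finset (Fin h → Fin 2) → Finset (Fin h → Fin 2) := fun A => A.image ν with hσFdef
  have hσσ : ∀ A, σF (σF A) = A := by
    intro A
    show (A.image ν).image ν = A
    rw [Finset.image_image, show ν ∘ ν = id from funext hνν, Finset.image_id]
  set m := 2 ^ (h - 1) - 1 with hmdef
  set Mset := (Sf h).powersetCard m with hMsetdef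
  have hMmem : ∀ A, A ∈ Mset ↔ A ⊆ Sf h ∧ A.card = m := by
    intro A; rw [hMsetdef, Finset.mem_powersetCard]
  have hSmem : ∀ i, i ∈ Sf h ↔ Surjective i := by
    intro i; simp [Sf]
  have hMcl : ∀ A ∈ Mset, σF A ∈ Mset := by
    intro A hA
    rw [hMmem] at hA ⊢
    constructor
    · intro x hx
      obtain ⟨u, hu, rfl⟩ := Finset.mem_image.mp hx
      rw [hSmem]
      exact hνS u ((hSmem u).mp (hA.1 hu))
    · rw [show σF A = A.image ν from rfl, Finset.card_image_of_injective _ hνinj]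
      exact hA.2
  have hoddm : ∃ e, 2 ^ (h - 1) = 2 * e := by
    refine ⟨2 ^ (h - 2), ?_⟩
    rw [show h - 1 = (h - 2) + 1 by omega, pow_succ]
    ring
  have hMnf : ∀ A ∈ Mset, σF A ≠ A := by
    intro A hA hAA
    have hAcl : ∀ x ∈ A, ν x ∈ A := by
      intro x hx
      rw [← hAA]
      exact Finset.mem_image_of_mem ν hx
    have hAnf : ∀ x ∈ A, ν x ≠ x := by
      intro x _ hc
      have := congrFun hc ⟨0, by omega⟩
      exact (by decide : ∀ t : Fin 2, ¬ t + 1 = t) _ this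
    have hev := even_card_of_involution ν hνν A.card A le_rfl hAcl hAnf
    rw [(hMmem A).mp hA |>.2] at hev
    obtain ⟨e, he⟩ := hoddm
    have hpos : 0 < 2 ^ (h - 1) := pow_pos (by norm_num) _
    rw [Nat.even_iff, hmdef, he] at hev
    rw [he] at hpos
    omega
  have hScard : (Sf h).card = 2 ^ h - 2 := card_Sf hh
  have hMcard : Mset.card = Nat.choose (2 ^ h - 2) m := by
    rw [hMsetdef, Finset.card_powersetCard, hScard]
  -- pairs
  set τ : {p : Fin k × Fin k // p.1 ≠ p.2} → {p : Fin k × Fin k // p.1 ≠ p.2} :=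
    fun p => ⟨(p.val.2, p.val.1), Ne.symm p.prop⟩ with hτdef
  have hττ : ∀ p, τ (τ p) = p := fun p => rfl
  have hQcard : (Finset.univ : Finset {p : Fin k × Fin k // p.1 ≠ p.2}).card = k * k - k := by
    rw [Finset.card_univ, card_pairs]
  obtain ⟨T, hTmem0, hTeq0, hTinj0⟩ := selection τ σF hττ hσσ ∅ (k * k - k)
    Finset.univ Mset (le_of_eq hQcard)
    (fun p _ => Finset.mem_univ _)
    (fun p _ hc => p.prop (congrArg (fun q => q.val.1) hc).symm)
    hMcl hMnf
    (by rw [hQcard, hMcard, ← mul_sub_one']; exact hineq)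
  have hTM : ∀ p, T p ∈ Mset := fun p => hTmem0 p (Finset.mem_univ _)
  have hTsurj : ∀ p i, i ∈ T p → Surjective i := by
    intro p i hi
    exact (hSmem i).mp (((hMmem (T p)).mp (hTM p)).1 hi)
  have hTcard : ∀ p, (T p).card = m := fun p => ((hMmem (T p)).mp (hTM p)).2
  have hTswap : ∀ p, T (τ p) = (T p).image ν := fun p => hTeq0 p (Finset.mem_univ _)
  have hTinj : ∀ p q, T p = T q → p = q :=
    fun p q => hTinj0 p (Finset.mem_univ _) q (Finset.mem_univ _)
  -- the relation
  set ρ : Set (Fin h → Fin k) :=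
    {w | (∃ c, w = fun _ => c) ∨
      ∃ (p : {p : Fin k × Fin k // p.1 ≠ p.2}) (i : Fin h → Fin 2),
        i ∈ T p ∧ w = pairFun p.val ∘ i} with hρdef
  have hconst : ∀ c : Fin k, (fun _ : Fin h => c) ∈ ρ := fun c => Or.inl ⟨c, rfl⟩
  have hnotconst : ∀ (p : {p : Fin k × Fin k // p.1 ≠ p.2}) (i : Fin h → Fin 2),
      Surjective i → ∀ c, pairFun p.val ∘ i ≠ fun _ => c := by
    intro p i hi c hc
    obtain ⟨j0, hj0⟩ := hi 0
    obtain ⟨j1, hj1⟩ := hi 1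
    have h0 := congrFun hc j0
    have h1 := congrFun hc j1
    simp only [comp_apply, hj0] at h0
    simp only [comp_apply, hj1] at h1
    rw [pairFun_zero] at h0
    rw [pairFun_one] at h1
    exact p.prop (h0.trans h1.symm)
  have hmemchar : ∀ (p : {p : Fin k × Fin k // p.1 ≠ p.2}) (i : Fin h → Fin 2),
      Surjective i → (pairFun p.val ∘ i ∈ ρ ↔ i ∈ T p) := by
    intro p i hi
    constructor
    · rintro (⟨c, hc⟩ | ⟨q, i', hi'T, heq⟩)
      · exact absurd hc (hnotconst p i hi c)
      · rcases decode p.prop q.prop hi heq with ⟨hqp, rfl⟩ | ⟨hqp, hiν⟩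
        · have hq : q = p := Subtype.ext hqp
          rwa [hq] at hi'T
        · have hq : q = τ p := Subtype.ext hqp
          rw [hq, hTswap, hiν] at hi'T
          obtain ⟨u, huT, hu⟩ := Finset.mem_image.mp hi'T
          have hui : u = i := hνinj hu
          rwa [hui] at huT
    · intro hiT
      exact Or.inr ⟨p, i, hiT, rfl⟩
  -- the relation works
  refine ⟨ρ, ⟨fun _ => ⟨0, by omega⟩, hconst _⟩, ?_⟩
  show _root_.pPol1 h ρ = _root_.Omega k 2
  apply Set.eq_of_subset_of_subset
  · -- _root_.pPol1 ⊆ _root_.Omega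
    intro f hf
    by_contra hfO
    simp only [_root_.Omega, Set.mem_setOf_eq] at hfO
    push_neg at hfO
    obtain ⟨⟨a, hadom, hfa⟩, hcard⟩ := hfO
    have hfin : (f.toFun '' f.Dom).Finite := Set.toFinite _
    have h1lt : 1 < (f.toFun '' f.Dom).ncard := by omega
    rw [Set.one_lt_ncard hfin] at h1lt
    obtain ⟨u, hu, v, hv, huv⟩ := h1lt
    obtain ⟨u', hu'dom, rfl⟩ := hu
    obtain ⟨v', hv'dom, rfl⟩ := hv
    -- choose b in Dom with f b ≠ f a
    obtain ⟨b, hbdom, hfab⟩ : ∃ b ∈ f.Dom, f.toFun b ≠ f.toFun a := by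
      by_cases hca : f.toFun u' = f.toFun a
      · exact ⟨v', hv'dom, by rw [← hca]; exact fun hc => huv hc.symm⟩
      · exact ⟨u', hu'dom, hca⟩
    have hab : a ≠ b := by
      intro hc; exact hfab (by rw [hc])
    set p : {p : Fin k × Fin k // p.1 ≠ p.2} := ⟨(a, b), hab⟩ with hpdef
    set q : {p : Fin k × Fin k // p.1 ≠ p.2} := ⟨(f.toFun a, f.toFun b), Ne.symm hfab⟩ with hqdef
    have hpq : p ≠ q := by
      intro hc
      exact hfa (congrArg (fun z => z.val.1) hc).symm
    have hTpq : T p ≠ T q := fun hc => hpq (hTinj p q hc)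
    have hnsub : ¬ T p ⊆ T q := by
      intro hsub
      exact hTpq (Finset.eq_of_subset_of_card_le hsub (by rw [hTcard, hTcard]))
    obtain ⟨i, hiTp, hiTq⟩ := Finset.not_subset.mp hnsub
    have hi : Surjective i := hTsurj p i hiTp
    have hwρ : pairFun p.val ∘ i ∈ ρ := (hmemchar p i hi).mpr hiTp
    have hdom : ∀ j, (pairFun p.val ∘ i) j ∈ f.Dom := by
      intro j
      show pairFun p.val (i j) ∈ f.Dom
      rcases fin2_cases (i j) with hj | hj
      · rw [hj, pairFun_zero]; exact hadom
      · rw [hj, pairFun_one]; exact hbdom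
    have him := hf (pairFun p.val ∘ i) hwρ hdom
    have heq : (fun j => f.toFun ((pairFun p.val ∘ i) j)) = pairFun q.val ∘ i := by
      funext j
      show f.toFun (pairFun p.val (i j)) = pairFun q.val (i j)
      rcases fin2_cases (i j) with hj | hj
      · rw [hj, pairFun_zero, pairFun_zero]
      · rw [hj, pairFun_one, pairFun_one]
    rw [heq] at him
    exact hiTq ((hmemchar q i hi).mp him)
  · -- _root_.Omega ⊆ _root_.pPol1
    intro f hf
    simp only [_root_.Omega, Set.mem_setOf_eq] at hf
    intro w hw hdom
    rcases hf with hid | hcard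
    · have : (fun j => f.toFun (w j)) = w := funext fun j => hid (w j) (hdom j)
      rw [this]; exact hw
    · have hfin : (f.toFun '' f.Dom).Finite := Set.toFinite _
      have hle : (f.toFun '' f.Dom).ncard ≤ 1 := by omega
      rw [Set.ncard_le_one hfin] at hle
      set j0 : Fin h := ⟨0, by omega⟩
      refine Or.inl ⟨f.toFun (w j0), funext fun j => ?_⟩
      exact hle (f.toFun (w j)) ⟨w j, hdom j, rfl⟩ (f.toFun (w j0)) ⟨w j0, hdom j0, rfl⟩

end TwoRigidAux

/-- For `k ≥ 2`, `h ≥ 1`, a non-empty `h`-ary hereditarily 2-rigid relation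
on `Fin k` exists iff `k(k-1) ≤ C(2^h - 2, 2^(h-1) - 1)`. -/
theorem exists_hereditarilyTwoRigid_iff (k h : ℕ) (hk : 2 ≤ k) (hh : 1 ≤ h) :
    (∃ ρ : Set (Fin h → Fin k), ρ.Nonempty ∧ HereditarilyRigid h 2 ρ) ↔
      k * (k - 1) ≤ Nat.choose (2 ^ h - 2) (2 ^ (h - 1) - 1) := by
  constructor
  · rintro ⟨ρ, hne, hrig⟩
    exact TwoRigidAux.fwd_dir k h hk hh ρ hne hrig
  · intro hineq
    exact TwoRigidAux.bwd_dir k h hk hh hineq
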